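/- arXiv:2403.05891 — 7 statements merged into one kernel-verified Lean document; each statement's English description precedes it below -/
import Mathlib

section
/- (Proposition 3.1) Suppose M ≤ d and the snapshot matrix X ∈ ℂ^{d×M} admits an exact full-rank SVD X = U Σ Vᴴ, where U ∈ ℂ^{d×M} satisfies Uᴴ U = I_M, V ∈ ℂ^{M×M} is unitary, and Σ ∈ ℂ^{M×M} is invertible (so Xᴴ U = V Σ has rank M). Let K̃ = Uᴴ Y V Σ⁻¹ ∈ ℂ^{M×M} be the matrix produced by exact DMD with rank r = M. Then for every λ ∈ ℂ and v ∈ ℂ^M with K̃ᴴ v = λ v, one has (Yᴴ − λ Xᴴ) U v = 0; equivalently, the naive ResDMD residual numerator vᴴ[Uᴴ Y Yᴴ U − λ Uᴴ Y Xᴴ U − λ̄ Uᴴ X Yᴴ U + |λ|² Uᴴ X Xᴴ U] v vanishes. -/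
open Matrix

/-- (Proposition 3.1) If `M ≤ d` and `X = U S Vᴴ` is an exact full-rank SVD, with
`K̃ = Uᴴ Y V S⁻¹` the exact-DMD matrix with rank `r = M`, then for every eigenpair
`(λ, v)` of `K̃ᴴ` the naive ResDMD residual vanishes. -/
theorem prop_3_1_naive_residual_vanishes
    {d M : ℕ} (hMd : M ≤ d)
    (X Y U : Matrix (Fin d) (Fin M) ℂ)
    (V S : Matrix (Fin M) (Fin M) ℂ)
    (hX : X = U * S * Vᴴ)
    (hU : Uᴴ * U = 1)
    (hV₁ : Vᴴ * V = 1) (hV₂ : V * Vᴴ = 1)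
    (hS : IsUnit S.det)
    (Ktil : Matrix (Fin M) (Fin M) ℂ)
    (hKtil : Ktil = Uᴴ * Y * V * S⁻¹)
    (l : ℂ) (v : Fin M → ℂ)
    (hv : Ktilᴴ *ᵥ v = l • v) :
    (Yᴴ - l • Xᴴ) *ᵥ (U *ᵥ v) = 0 ∧
      star v ⬝ᵥ ((Uᴴ * Y * Yᴴ * U - l • (Uᴴ * Y * Xᴴ * U)
          - (starRingEnd ℂ) l • (Uᴴ * X * Yᴴ * U)
          + ((‖l‖ ^ 2 : ℝ) : ℂ) • (Uᴴ * X * Xᴴ * U)) *ᵥ v) = 0 := by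
  have hUY : Uᴴ * Y = Ktil * S * Vᴴ := by
    rw [hKtil]
    rw [Matrix.mul_assoc (Uᴴ * Y * V) S⁻¹ S, Matrix.nonsing_inv_mul S hS, Matrix.mul_one,
      Matrix.mul_assoc (Uᴴ * Y) V Vᴴ, hV₂, Matrix.mul_one]
  have hYU : Yᴴ * U = V * Sᴴ * Ktilᴴ := by
    have := congrArg conjTranspose hUY
    simpa [Matrix.conjTranspose_mul, Matrix.mul_assoc] using this
  have hXU : Xᴴ * U = V * Sᴴ := by
    rw [hX]
    simp [Matrix.conjTranspose_mul, Matrix.mul_assoc, hU]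
  have h1 : (Yᴴ - l • Xᴴ) *ᵥ (U *ᵥ v) = 0 := by
    have e : (Yᴴ - l • Xᴴ) *ᵥ (U *ᵥ v)
        = (V * Sᴴ) *ᵥ (Ktilᴴ *ᵥ v) - l • ((V * Sᴴ) *ᵥ v) := by
      rw [Matrix.mulVec_mulVec, Matrix.sub_mul, Matrix.smul_mul, hYU, hXU,
        Matrix.sub_mulVec, Matrix.smul_mulVec, Matrix.mulVec_mulVec]
    rw [e, hv, Matrix.mulVec_smul, sub_self]
  refine ⟨h1, ?_⟩
  have hnorm : ((‖l‖ ^ 2 : ℝ) : ℂ) = (starRingEnd ℂ) l * l := by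
    rw [mul_comm, Complex.mul_conj']
    norm_cast
  have hA : (Uᴴ * Y * Yᴴ * U - l • (Uᴴ * Y * Xᴴ * U)
          - (starRingEnd ℂ) l • (Uᴴ * X * Yᴴ * U)
          + ((‖l‖ ^ 2 : ℝ) : ℂ) • (Uᴴ * X * Xᴴ * U))
      = (Uᴴ * (Y - (starRingEnd ℂ) l • X)) * ((Yᴴ - l • Xᴴ) * U) := by
    rw [hnorm]
    simp only [Matrix.mul_sub, Matrix.sub_mul, Matrix.mul_smul, Matrix.smul_mul, smul_smul,
      Matrix.mul_assoc]
    module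
  rw [hA, ← Matrix.mulVec_mulVec, ← Matrix.mulVec_mulVec, ← Matrix.mulVec_mulVec, h1]
  simp
end

section
/- (Proposition of Section 4.2, vanishing of the naive kernelized residual) Suppose M ≤ N and Ŵ Ψ_X ∈ ℂ^{M×N} has rank M, with full SVD Ŵ Ψ_X = Q Σ Zᴴ, where Q ∈ ℂ^{M×M} is unitary, Z ∈ ℂ^{N×M} satisfies Zᴴ Z = I_M, and Σ ∈ ℂ^{M×M} is invertible and Hermitian (real diagonal). Let K̂ = Σ⁻¹ Qᴴ (Ŵ Ψ_Y)(Ŵ Ψ_X)ᴴ Q Σ⁻¹ ∈ ℂ^{M×M} be the kernelized EDMD matrix. Then for every eigenvalue–eigenvector pair (λ, v) of K̂ (i.e. K̂ v = λ v), one has Ŵ(Ψ_Y − λ Ψ_X) Z v = 0; in particular the naive kernelized ResDMD residual of (λ, v) with respect to the feature map Ψ Z vanishes. -/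
open Matrix

/-- (Section 4.2) If `M ≤ N` and `Ŵ Ψ_X` has rank `M` with full SVD `Ŵ Ψ_X = Q S Zᴴ`,
then for every eigenpair `(λ, v)` of the kernelized EDMD matrix `K̂`, the naive kernelized
ResDMD residual with respect to the feature map `Ψ Z` vanishes: `Ŵ (Ψ_Y − λ Ψ_X) Z v = 0`. -/
theorem naive_kernelized_residual_vanishes
    {M N : ℕ} (hMN : M ≤ N)
    (PsiX PsiY : Matrix (Fin M) (Fin N) ℂ)
    (W Q S : Matrix (Fin M) (Fin M) ℂ)
    (Z : Matrix (Fin N) (Fin M) ℂ)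
    (hrank : (W * PsiX).rank = M)
    (hSVD : W * PsiX = Q * S * Zᴴ)
    (hQ₁ : Qᴴ * Q = 1) (hQ₂ : Q * Qᴴ = 1)
    (hZ : Zᴴ * Z = 1)
    (hSH : Sᴴ = S) (hS : IsUnit S.det)
    (Khat : Matrix (Fin M) (Fin M) ℂ)
    (hKhat : Khat = S⁻¹ * Qᴴ * (W * PsiY) * (W * PsiX)ᴴ * Q * S⁻¹)
    (l : ℂ) (v : Fin M → ℂ)
    (hv : Khat *ᵥ v = l • v) :
    (W * (PsiY - l • PsiX) * Z) *ᵥ v = 0 := by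
  have hSinv : S * S⁻¹ = 1 := Matrix.mul_nonsing_inv S hS
  have hSinv' : S⁻¹ * S = 1 := Matrix.nonsing_inv_mul S hS
  have h1 : W * PsiX * Z = Q * S := by
    rw [hSVD, Matrix.mul_assoc (Q * S), hZ, mul_one]
  have h2 : Khat = S⁻¹ * Qᴴ * (W * PsiY) * Z := by
    rw [hKhat, hSVD]
    simp only [conjTranspose_mul, conjTranspose_conjTranspose, hSH, Matrix.mul_assoc]
    rw [show Qᴴ * (Q * S⁻¹) = S⁻¹ by rw [← Matrix.mul_assoc, hQ₁, Matrix.one_mul],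
        hSinv, Matrix.mul_one]
  have hmat : Q * S * (S⁻¹ * Qᴴ * (W * PsiY) * Z) = W * PsiY * Z := by
    simp only [Matrix.mul_assoc]
    rw [← Matrix.mul_assoc S S⁻¹, hSinv, Matrix.one_mul, ← Matrix.mul_assoc Q Qᴴ, hQ₂,
        Matrix.one_mul]
  have h3 : (W * PsiY * Z) *ᵥ v = l • ((Q * S) *ᵥ v) := by
    have := congrArg (fun w => (Q * S) *ᵥ w) hv
    simp only [Matrix.mulVec_smul, h2, Matrix.mulVec_mulVec, hmat] at this
    exact this
  have h4 : W * (PsiY - l • PsiX) * Z = W * PsiY * Z - l • (W * PsiX * Z) := by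
    rw [Matrix.mul_sub, Matrix.sub_mul, Matrix.mul_smul, Matrix.smul_mul]
  rw [h4, Matrix.sub_mulVec, h3, h1, Matrix.smul_mulVec, sub_self]
end

section
/- (Proposition 4.1, eigenvalue correspondence for kernelized EDMD) Let Ŵ Ψ_X = Q Σ Zᴴ be an SVD, where Q ∈ ℂ^{M×M} is unitary, Z ∈ ℂ^{N×M} satisfies Zᴴ Z = I_M, and Σ = diag(σ₁,…,σ_M) with all σ_j real and nonnegative. Let Σ† = diag(σ₁†,…,σ_M†), where σ† = 1/σ if σ ≠ 0 and 0† = 0. Define the kernelized EDMD matrix K̂ = Σ† Qᴴ (Ŵ Ψ_Y)(Ŵ Ψ_X)ᴴ Q Σ† ∈ ℂ^{M×M} and the EDMD matrix K = Z Σ† Qᴴ (Ŵ Ψ_Y) ∈ ℂ^{N×N} (which equals (Ŵ Ψ_X)† Ŵ Ψ_Y). Then for every λ ∈ ℂ with λ ≠ 0 and every v ∈ ℂ^M: K̂ v = λ v if and only if K (Z v) = λ (Z v); moreover v ≠ 0 if and only if Z v ≠ 0, so (λ, v) is an eigenvalue–eigenvector pair of K̂ if and only if (λ, Z v) is an eigenvalue–eigenvector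 pair of K. -/
open Matrix

/-- (Proposition 4.1) Eigenvalue correspondence for kernelized EDMD: for `λ ≠ 0`,
`(λ, v)` is an eigenpair of `K̂` if and only if `(λ, Z v)` is an eigenpair of `K`. -/
theorem kernelized_EDMD_eigenvalue_correspondence
    {M N : ℕ}
    (PsiX PsiY : Matrix (Fin M) (Fin N) ℂ)
    (W Q : Matrix (Fin M) (Fin M) ℂ)
    (Z : Matrix (Fin N) (Fin M) ℂ)
    (σ : Fin M → ℝ) (hσ : ∀ i, 0 ≤ σ i)
    (hSVD : W * PsiX = Q * Matrix.diagonal (fun i => (σ i : ℂ)) * Zᴴ)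
    (hQ₁ : Qᴴ * Q = 1) (hQ₂ : Q * Qᴴ = 1)
    (hZ : Zᴴ * Z = 1)
    (Sdag : Matrix (Fin M) (Fin M) ℂ)
    (hSdag : Sdag = Matrix.diagonal (fun i => (((σ i)⁻¹ : ℝ) : ℂ)))
    (Khat : Matrix (Fin M) (Fin M) ℂ)
    (hKhat : Khat = Sdag * Qᴴ * (W * PsiY) * (W * PsiX)ᴴ * Q * Sdag)
    (K : Matrix (Fin N) (Fin N) ℂ)
    (hK : K = Z * Sdag * Qᴴ * (W * PsiY))
    (l : ℂ) (hl : l ≠ 0) (v : Fin M → ℂ) :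
    (Khat *ᵥ v = l • v ↔ K *ᵥ (Z *ᵥ v) = l • (Z *ᵥ v)) ∧
      (v ≠ 0 ↔ Z *ᵥ v ≠ 0) := by
  set Sg : Matrix (Fin M) (Fin M) ℂ := Matrix.diagonal (fun i => (σ i : ℂ)) with hSg
  set D : Matrix (Fin M) (Fin M) ℂ :=
    Matrix.diagonal (fun i => if σ i = 0 then (0 : ℂ) else 1) with hD
  set A : Matrix (Fin M) (Fin N) ℂ := Sdag * Qᴴ * (W * PsiY) with hA
  have hSgSdag : Sg * Sdag = D := by
    rw [hSg, hSdag, hD, diagonal_mul_diagonal]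
    apply congrArg Matrix.diagonal
    funext i
    by_cases h : σ i = 0
    · simp [h]
    · have hne : (σ i : ℂ) ≠ 0 := by exact_mod_cast h
      simp [h, Complex.ofReal_inv, mul_inv_cancel₀ hne]
  have hDSdag : D * Sdag = Sdag := by
    rw [hSdag, hD, diagonal_mul_diagonal]
    apply congrArg Matrix.diagonal
    funext i
    by_cases h : σ i = 0 <;> simp [h]
  have hct : (W * PsiX)ᴴ = Z * Sg * Qᴴ := by
    rw [hSVD, conjTranspose_mul, conjTranspose_mul, conjTranspose_conjTranspose,
      hSg, diagonal_conjTranspose]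
    have hs : star (fun i => (σ i : ℂ)) = fun i => (σ i : ℂ) := by
      funext i; simp [Complex.conj_ofReal]
    rw [hs, Matrix.mul_assoc]
  have hKhat' : Khat = A * Z * D := by
    rw [hKhat, hct]
    have h1 : Qᴴ * (Q * Sdag) = Sdag := by rw [← Matrix.mul_assoc, hQ₁, Matrix.one_mul]
    simp only [Matrix.mul_assoc]
    rw [h1, hSgSdag]
  have hDA : D * A = A := by
    rw [hA]
    simp only [← Matrix.mul_assoc]
    rw [hDSdag]
  have hK' : K = Z * A := by rw [hK, hA]; simp only [Matrix.mul_assoc]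
  have hDKhat : D * Khat = Khat := by
    rw [hKhat']
    simp only [← Matrix.mul_assoc]
    rw [hDA]
  have hKv : ∀ w : Fin M → ℂ, Khat *ᵥ w = A *ᵥ (Z *ᵥ (D *ᵥ w)) := by
    intro w; simp only [mulVec_mulVec]; rw [hKhat', Matrix.mul_assoc]
  have hKZ : ∀ x : Fin M → ℂ, K *ᵥ (Z *ᵥ x) = Z *ᵥ (A *ᵥ (Z *ᵥ x)) := by
    intro x; simp only [mulVec_mulVec]; rw [hK', Matrix.mul_assoc]
  have hZHZ : ∀ w : Fin M → ℂ, Zᴴ *ᵥ (Z *ᵥ w) = w := by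
    intro w; rw [mulVec_mulVec, hZ, one_mulVec]
  have cancel : ∀ w : Fin M → ℂ, l • (D *ᵥ w) = l • w → D *ᵥ w = w := by
    intro w hw
    have h1 := congrArg (fun x => l⁻¹ • x) hw
    simpa [smul_smul, inv_mul_cancel₀ hl] using h1
  refine ⟨⟨fun h => ?_, fun h => ?_⟩, ?_⟩
  · -- forward
    have hDv : D *ᵥ v = v := by
      apply cancel
      calc l • (D *ᵥ v) = D *ᵥ (l • v) := (mulVec_smul D l v).symm
        _ = D *ᵥ (Khat *ᵥ v) := by rw [h]
        _ = Khat *ᵥ v := by rw [mulVec_mulVec, hDKhat]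
        _ = l • v := h
    have hAZ : A *ᵥ (Z *ᵥ v) = l • v := by
      calc A *ᵥ (Z *ᵥ v) = A *ᵥ (Z *ᵥ (D *ᵥ v)) := by rw [hDv]
        _ = Khat *ᵥ v := (hKv v).symm
        _ = l • v := h
    rw [hKZ v, hAZ, mulVec_smul]
  · -- backward
    have hZAZ : Z *ᵥ (A *ᵥ (Z *ᵥ v)) = l • (Z *ᵥ v) := by rw [← hKZ v]; exact h
    have hAZ : A *ᵥ (Z *ᵥ v) = l • v := by
      have h3 : Zᴴ *ᵥ (Z *ᵥ (A *ᵥ (Z *ᵥ v))) = Zᴴ *ᵥ (l • (Z *ᵥ v)) := by rw [hZAZ]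
      rwa [hZHZ, mulVec_smul, hZHZ] at h3
    have hDv : D *ᵥ v = v := by
      apply cancel
      calc l • (D *ᵥ v) = D *ᵥ (l • v) := (mulVec_smul D l v).symm
        _ = D *ᵥ (A *ᵥ (Z *ᵥ v)) := by rw [hAZ]
        _ = A *ᵥ (Z *ᵥ v) := by rw [mulVec_mulVec, hDA]
        _ = l • v := hAZ
    rw [hKv v, hDv]; exact hAZ
  · constructor
    · intro hv hZv
      exact hv (by rw [← hZHZ v, hZv, mulVec_zero])
    · intro hZv hv
      exact hZv (by rw [hv, mulVec_zero])
end

section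
/- (Simplified residual for eigenpairs of exact DMD, Algorithm 2) Suppose U ∈ ℂ^{d×r} satisfies Uᴴ U = I_r and X V Σ⁻¹ = U, where V ∈ ℂ^{M×r} and Σ ∈ ℂ^{r×r} is invertible. Let K̃ = Uᴴ Y V Σ⁻¹ and L̃ = (Y V Σ⁻¹)ᴴ (Y V Σ⁻¹). If K̃ w = λ w for λ ∈ ℂ and w ∈ ℂ^r, then ‖Y V Σ⁻¹ w − λ X V Σ⁻¹ w‖² = wᴴ L̃ w − |λ|² ‖w‖²; hence for w ≠ 0 the ResDMD residual satisfies res(λ, w)² = (wᴴ L̃ w)/‖w‖² − |λ|². -/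
open Matrix

/-- The Euclidean (ℓ²) norm of a complex vector. -/
noncomputable def vecEuclidNorm {n : ℕ} (x : Fin n → ℂ) : ℝ :=
  Real.sqrt (∑ i, ‖x i‖ ^ 2)

lemma enorm_sq {n : ℕ} (x : Fin n → ℂ) :
    (((vecEuclidNorm x) ^ 2 : ℝ) : ℂ) = star x ⬝ᵥ x := by
  unfold vecEuclidNorm
  rw [Real.sq_sqrt (Finset.sum_nonneg fun i _ => sq_nonneg _)]
  push_cast
  simp only [dotProduct, Pi.star_apply, RCLike.star_def]
  refine Finset.sum_congr rfl fun i _ => ?_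
  rw [mul_comm, Complex.mul_conj, Complex.normSq_eq_norm_sq]
  push_cast; ring

lemma conj_dot {n : ℕ} (a b : Fin n → ℂ) :
    star (star a ⬝ᵥ b) = star b ⬝ᵥ a := by
  simp [dotProduct, star_sum, mul_comm]

/-- (Simplified residual for eigenpairs of exact DMD, Algorithm 2.) If `K̃ w = λ w`, then
`‖Y V Σ⁻¹ w − λ X V Σ⁻¹ w‖² = wᴴ L̃ w − |λ|² ‖w‖²`; hence for `w ≠ 0` the ResDMD residual
satisfies `res(λ,w)² = (wᴴ L̃ w)/‖w‖² − |λ|²`. -/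
theorem exact_DMD_simplified_residual
    {d M r : ℕ}
    (X Y : Matrix (Fin d) (Fin M) ℂ)
    (U : Matrix (Fin d) (Fin r) ℂ)
    (V : Matrix (Fin M) (Fin r) ℂ)
    (S : Matrix (Fin r) (Fin r) ℂ)
    (hS : IsUnit S.det)
    (hU : Uᴴ * U = 1)
    (hXVS : X * V * S⁻¹ = U)
    (Ktil : Matrix (Fin r) (Fin r) ℂ) (hKtil : Ktil = Uᴴ * Y * V * S⁻¹)
    (Ltil : Matrix (Fin r) (Fin r) ℂ)
    (hLtil : Ltil = (Y * V * S⁻¹)ᴴ * (Y * V * S⁻¹))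
    (l : ℂ) (w : Fin r → ℂ)
    (hw : Ktil *ᵥ w = l • w) :
    ((vecEuclidNorm ((Y * V * S⁻¹) *ᵥ w - l • ((X * V * S⁻¹) *ᵥ w)) ^ 2 : ℝ) : ℂ) =
        star w ⬝ᵥ (Ltil *ᵥ w) - ((‖l‖ ^ 2 : ℝ) : ℂ) * ((vecEuclidNorm w ^ 2 : ℝ) : ℂ) ∧
      (w ≠ 0 →
        ((((vecEuclidNorm ((Y * V * S⁻¹) *ᵥ w - l • ((X * V * S⁻¹) *ᵥ w)) / vecEuclidNorm w) ^ 2 : ℝ)) : ℂ) =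
          star w ⬝ᵥ (Ltil *ᵥ w) / ((vecEuclidNorm w ^ 2 : ℝ) : ℂ) - ((‖l‖ ^ 2 : ℝ) : ℂ)) := by
  set B := Y * V * S⁻¹ with hB
  -- h2 : ⟨Uw, Bw⟩ = l ⟨w,w⟩
  have h2 : star ((X * V * S⁻¹) *ᵥ w) ⬝ᵥ (B *ᵥ w) = l * (star w ⬝ᵥ w) := by
    rw [hXVS, star_mulVec, dotProduct_mulVec, vecMul_vecMul]
    have : Uᴴ * B = Ktil := by rw [hKtil, hB]; simp only [Matrix.mul_assoc]
    rw [this, ← dotProduct_mulVec, hw, dotProduct_smul, smul_eq_mul]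
  have hreal : star (star w ⬝ᵥ w) = star w ⬝ᵥ w := by
    rw [conj_dot]
  -- h3 : ⟨Bw, Uw⟩ = conj l ⟨w,w⟩
  have h3 : star (B *ᵥ w) ⬝ᵥ ((X * V * S⁻¹) *ᵥ w) = star l * (star w ⬝ᵥ w) := by
    have := congrArg star h2
    rw [conj_dot] at this
    rw [this, star_mul', hreal]
  -- h1 : ⟨Uw, Uw⟩ = ⟨w,w⟩
  have h1 : star ((X * V * S⁻¹) *ᵥ w) ⬝ᵥ ((X * V * S⁻¹) *ᵥ w) = star w ⬝ᵥ w := by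
    rw [hXVS, star_mulVec, dotProduct_mulVec, vecMul_vecMul, hU, vecMul_one]
  -- h4 : ⟨Bw, Bw⟩ = ⟨w, L w⟩
  have h4 : star (B *ᵥ w) ⬝ᵥ (B *ᵥ w) = star w ⬝ᵥ (Ltil *ᵥ w) := by
    rw [star_mulVec, dotProduct_mulVec, vecMul_vecMul, ← hLtil, ← dotProduct_mulVec]
  have hl : ((‖l‖ ^ 2 : ℝ) : ℂ) = l * star l := by
    rw [RCLike.star_def, Complex.mul_conj, Complex.normSq_eq_norm_sq]
  have key : ((vecEuclidNorm (B *ᵥ w - l • ((X * V * S⁻¹) *ᵥ w)) ^ 2 : ℝ) : ℂ) =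
      star w ⬝ᵥ (Ltil *ᵥ w) - ((‖l‖ ^ 2 : ℝ) : ℂ) * ((vecEuclidNorm w ^ 2 : ℝ) : ℂ) := by
    rw [enorm_sq, enorm_sq, hl]
    simp only [star_sub, star_smul, sub_dotProduct, dotProduct_sub, smul_dotProduct,
      dotProduct_smul, smul_eq_mul]
    rw [h1, h2, h3, h4]
    try ring
  refine ⟨key, fun hwne => ?_⟩
  have hew : vecEuclidNorm w ≠ 0 := by
    obtain ⟨i, hi⟩ := Function.ne_iff.mp hwne
    have hpos : 0 < ∑ i, ‖w i‖ ^ 2 := by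
      refine Finset.sum_pos' (fun j _ => sq_nonneg _) ⟨i, Finset.mem_univ i, ?_⟩
      exact pow_pos (norm_pos_iff.mpr hi) 2
    exact ne_of_gt (Real.sqrt_pos.mpr hpos)
  have hew2 : ((vecEuclidNorm w ^ 2 : ℝ) : ℂ) ≠ 0 := by
    simp [pow_eq_zero_iff, hew]
  rw [div_pow, Complex.ofReal_div, key, sub_div, mul_div_assoc, div_self hew2, mul_one]
end

section
/- (K̂ᴴ solves the kernelized dual least-squares problem (4.2)) Suppose Q̂ ∈ ℂ^{M×r} with Q̂ᴴ Q̂ = I_r, Ẑ ∈ ℂ^{N×r} with Ẑᴴ Ẑ = I_r, and Σ̂ ∈ ℂ^{r×r} invertible and Hermitian satisfy (Ŵ Ψ_X)ᴴ Q̂ = Ẑ Σ̂. Define Ψ̂_X = (Ŵ Ψ_X)ᴴ Q̂ Σ̂⁻¹, Ψ̂_Y = (Ŵ Ψ_Y)ᴴ Q̂ Σ̂⁻¹ ∈ ℂ^{N×r}, and K̂ = Σ̂⁻¹ Q̂ᴴ (Ŵ Ψ_Y)(Ŵ Ψ_X)ᴴ Q̂ Σ̂⁻¹ ∈ ℂ^{r×r}.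 Then K̂ᴴ is a solution of min over M' ∈ ℂ^{r×r} of ‖Ψ̂_Y − Ψ̂_X M'‖_F; that is, for every M' ∈ ℂ^{r×r}, ‖Ψ̂_Y − Ψ̂_X K̂ᴴ‖_F ≤ ‖Ψ̂_Y − Ψ̂_X M'‖_F. -/
open Matrix

/-- The Frobenius norm of a complex matrix. -/
noncomputable def fro {m n : ℕ} (A : Matrix (Fin m) (Fin n) ℂ) : ℝ :=
  Real.sqrt (∑ i, ∑ j, ‖A i j‖ ^ 2)

lemma fro_le_of_orth {m n : ℕ} (A C : Matrix (Fin m) (Fin n) ℂ) (h : Aᴴ * C = 0) :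
    fro A ≤ fro (A + C) := by
  unfold fro
  apply Real.sqrt_le_sqrt
  rw [Finset.sum_comm (γ := Fin m) (α := Fin n)]
  rw [Finset.sum_comm (γ := Fin m) (α := Fin n)]
  apply Finset.sum_le_sum
  intro j _
  have hcross : ∑ i, (A i j * (starRingEnd ℂ) (C i j)).re = 0 := by
    have h0 : (Aᴴ * C) j j = 0 := by rw [h]; rfl
    have : ∑ i, (starRingEnd ℂ) (A i j) * C i j = 0 := by
      simpa [Matrix.mul_apply, Matrix.conjTranspose_apply] using h0
    have := congrArg Complex.re (congrArg (starRingEnd ℂ) this)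
    simpa [map_sum, Complex.re_sum] using this
  have expand : ∀ i, ‖(A + C) i j‖ ^ 2
      = ‖A i j‖ ^ 2 + ‖C i j‖ ^ 2 + 2 * (A i j * (starRingEnd ℂ) (C i j)).re := by
    intro i
    have : ((A + C) i j) = A i j + C i j := rfl
    rw [this]
    simp only [Complex.sq_norm, Complex.normSq_add]
  calc ∑ i, ‖A i j‖ ^ 2 ≤ ∑ i, (‖A i j‖ ^ 2 + ‖C i j‖ ^ 2) := by
        apply Finset.sum_le_sum; intro i _; nlinarith [sq_nonneg ‖C i j‖]
    _ = ∑ i, ‖(A + C) i j‖ ^ 2 := by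
        simp only [expand]
        rw [Finset.sum_add_distrib, Finset.sum_add_distrib, ← Finset.mul_sum,
          hcross, mul_zero, add_zero]
        exact Finset.sum_add_distrib.symm

/-- (`K̂ᴴ` solves the kernelized dual least-squares problem (4.2).) For every
`M' ∈ ℂ^{r×r}`, `‖Ψ̂_Y − Ψ̂_X K̂ᴴ‖_F ≤ ‖Ψ̂_Y − Ψ̂_X M'‖_F`. -/
theorem kernelized_dual_least_squares
    {M N r : ℕ}
    (PsiX PsiY : Matrix (Fin M) (Fin N) ℂ)
    (W : Matrix (Fin M) (Fin M) ℂ)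
    (Qh : Matrix (Fin M) (Fin r) ℂ) (hQ : Qhᴴ * Qh = 1)
    (Zh : Matrix (Fin N) (Fin r) ℂ) (hZ : Zhᴴ * Zh = 1)
    (Sh : Matrix (Fin r) (Fin r) ℂ) (hSH : Shᴴ = Sh) (hS : IsUnit Sh.det)
    (hSVD : (W * PsiX)ᴴ * Qh = Zh * Sh)
    (PsihX PsihY : Matrix (Fin N) (Fin r) ℂ)
    (hPsihX : PsihX = (W * PsiX)ᴴ * Qh * Sh⁻¹)
    (hPsihY : PsihY = (W * PsiY)ᴴ * Qh * Sh⁻¹)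
    (Khat : Matrix (Fin r) (Fin r) ℂ)
    (hKhat : Khat = Sh⁻¹ * Qhᴴ * (W * PsiY) * (W * PsiX)ᴴ * Qh * Sh⁻¹) :
    ∀ M' : Matrix (Fin r) (Fin r) ℂ,
      fro (PsihY - PsihX * Khatᴴ) ≤ fro (PsihY - PsihX * M') := by
  intro M'
  have hSinv : Sh * Sh⁻¹ = 1 := Matrix.mul_nonsing_inv Sh hS
  have hSinvH : Sh⁻¹ᴴ = Sh⁻¹ := by
    rw [Matrix.conjTranspose_nonsing_inv, hSH]
  have hX : PsihX = Zh := by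
    rw [hPsihX, hSVD, Matrix.mul_assoc, hSinv, Matrix.mul_one]
  have hKh : Khatᴴ = Zhᴴ * PsihY := by
    have hZh : Zhᴴ = Sh⁻¹ * (Qhᴴ * (W * PsiX)) := by
      have := congrArg Matrix.conjTranspose hX
      rw [hPsihX] at this
      simpa [Matrix.conjTranspose_mul, hSinvH, Matrix.mul_assoc] using this.symm
    rw [hKhat, hPsihY, hZh]
    simp only [Matrix.conjTranspose_mul, hSinvH, Matrix.conjTranspose_conjTranspose,
      Matrix.mul_assoc]
  have key : PsihY - PsihX * M'
      = (PsihY - PsihX * Khatᴴ) + Zh * (Zhᴴ * PsihY - M') := by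
    rw [hKh, hX, Matrix.mul_sub]
    abel
  rw [key]
  apply fro_le_of_orth
  have hAZ : (PsihY - PsihX * Khatᴴ)ᴴ * Zh = 0 := by
    rw [hKh, hX]
    simp only [Matrix.conjTranspose_sub, Matrix.conjTranspose_mul,
      Matrix.conjTranspose_conjTranspose, Matrix.sub_mul, Matrix.mul_assoc, hZ,
      Matrix.mul_one, sub_self]
  rw [← Matrix.mul_assoc, hAZ, Matrix.zero_mul]
end

section
/- (Residual identity for kernelized ResDMD, Section 4.3) Suppose Q̂ ∈ ℂ^{M×r} with Q̂ᴴ Q̂ = I_r, Ẑ ∈ ℂ^{N×r} with Ẑᴴ Ẑ = I_r, and Σ̂ ∈ ℂ^{r×r} invertible and Hermitian satisfy (Ŵ Ψ_X)ᴴ Q̂ = Ẑ Σ̂. Define Ψ̂_X = (Ŵ Ψ_X)ᴴ Q̂ Σ̂⁻¹, Ψ̂_Y = (Ŵ Ψ_Y)ᴴ Q̂ Σ̂⁻¹, K̂ = Σ̂⁻¹ Q̂ᴴ (Ŵ Ψ_Y)(Ŵ Ψ_X)ᴴ Q̂ Σ̂⁻¹, and L̂ = (Q̂ Σ̂⁻¹)ᴴ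 (Ŵ Ψ_Y)(Ŵ Ψ_Y)ᴴ (Q̂ Σ̂⁻¹). Then for every λ ∈ ℂ and every v ∈ ℂ^r: (i) ‖Ψ̂_X v‖ = ‖v‖, and (ii) ‖Ψ̂_Y v − λ̄ Ψ̂_X v‖² = vᴴ [L̂ − λ K̂ᴴ − λ̄ K̂ + |λ|² I_r] v. -/
open Matrix

/-- The Euclidean (ℓ²) norm of a complex vector. -/
noncomputable def euclidEnorm {n : ℕ} (x : Fin n → ℂ) : ℝ :=
  Real.sqrt (∑ i, ‖x i‖ ^ 2)

lemma enorm_sq_eq {n : ℕ} (x : Fin n → ℂ) :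
    ((euclidEnorm x ^ 2 : ℝ) : ℂ) = star x ⬝ᵥ x := by
  unfold euclidEnorm
  rw [Real.sq_sqrt (by positivity)]
  push_cast
  simp only [dotProduct, Pi.star_apply, Complex.star_def]
  refine Finset.sum_congr rfl fun i _ => ?_
  rw [mul_comm, Complex.mul_conj']

lemma inner_mulVec {n m : ℕ} (A B : Matrix (Fin n) (Fin m) ℂ) (v w : Fin m → ℂ) :
    star (A *ᵥ v) ⬝ᵥ (B *ᵥ w) = star v ⬝ᵥ ((Aᴴ * B) *ᵥ w) := by
  rw [star_mulVec, dotProduct_mulVec, dotProduct_mulVec, vecMul_vecMul]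

/-- (Residual identity for kernelized ResDMD, Section 4.3.) For every `λ ∈ ℂ` and `v ∈ ℂ^r`:
(i) `‖Ψ̂_X v‖ = ‖v‖`, and (ii)
`‖Ψ̂_Y v − λ̄ Ψ̂_X v‖² = vᴴ [L̂ − λ K̂ᴴ − λ̄ K̂ + |λ|² I_r] v`. -/
theorem kernelized_ResDMD_residual_identity
    {M N r : ℕ}
    (PsiX PsiY : Matrix (Fin M) (Fin N) ℂ)
    (W : Matrix (Fin M) (Fin M) ℂ)
    (Qh : Matrix (Fin M) (Fin r) ℂ) (hQ : Qhᴴ * Qh = 1)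
    (Zh : Matrix (Fin N) (Fin r) ℂ) (hZ : Zhᴴ * Zh = 1)
    (Sh : Matrix (Fin r) (Fin r) ℂ) (hSH : Shᴴ = Sh) (hS : IsUnit Sh.det)
    (hSVD : (W * PsiX)ᴴ * Qh = Zh * Sh)
    (PsihX PsihY : Matrix (Fin N) (Fin r) ℂ)
    (hPsihX : PsihX = (W * PsiX)ᴴ * Qh * Sh⁻¹)
    (hPsihY : PsihY = (W * PsiY)ᴴ * Qh * Sh⁻¹)
    (Khat : Matrix (Fin r) (Fin r) ℂ)
    (hKhat : Khat = Sh⁻¹ * Qhᴴ * (W * PsiY) * (W * PsiX)ᴴ * Qh * Sh⁻¹)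
    (Lhat : Matrix (Fin r) (Fin r) ℂ)
    (hLhat : Lhat = (Qh * Sh⁻¹)ᴴ * (W * PsiY) * (W * PsiY)ᴴ * (Qh * Sh⁻¹))
    (l : ℂ) (v : Fin r → ℂ) :
    euclidEnorm (PsihX *ᵥ v) = euclidEnorm v ∧
      ((euclidEnorm (PsihY *ᵥ v - (starRingEnd ℂ) l • (PsihX *ᵥ v)) ^ 2 : ℝ) : ℂ) =
        star v ⬝ᵥ
          ((Lhat - l • Khatᴴ - (starRingEnd ℂ) l • Khat + ((‖l‖ ^ 2 : ℝ) : ℂ) • 1) *ᵥ v) := by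
  -- PsihX = Zh
  have hXZ : PsihX = Zh := by
    rw [hPsihX, hSVD, Matrix.mul_assoc, Matrix.mul_nonsing_inv Sh hS, Matrix.mul_one]
  have hSinvH : Sh⁻¹ᴴ = Sh⁻¹ := by
    rw [Matrix.conjTranspose_nonsing_inv, hSH]
  -- key Gram identities
  have hXX : PsihXᴴ * PsihX = 1 := by rw [hXZ]; exact hZ
  have hYY : PsihYᴴ * PsihY = Lhat := by
    rw [hPsihY, hLhat]
    simp only [Matrix.conjTranspose_mul, hSinvH, Matrix.conjTranspose_conjTranspose,
      Matrix.mul_assoc]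
  have hYX : PsihYᴴ * PsihX = Khat := by
    rw [hPsihY, hPsihX, hKhat]
    simp only [Matrix.conjTranspose_mul, hSinvH, Matrix.conjTranspose_conjTranspose,
      Matrix.mul_assoc]
  have hXY : PsihXᴴ * PsihY = Khatᴴ := by
    have := congrArg Matrix.conjTranspose hYX
    simpa [Matrix.conjTranspose_mul, Matrix.mul_assoc] using this
  constructor
  · -- part (i)
    have h1 : ((euclidEnorm (PsihX *ᵥ v) ^ 2 : ℝ) : ℂ) = ((euclidEnorm v ^ 2 : ℝ) : ℂ) := by
      rw [enorm_sq_eq, enorm_sq_eq, inner_mulVec, hXX, Matrix.one_mulVec]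
    have h2 : euclidEnorm (PsihX *ᵥ v) ^ 2 = euclidEnorm v ^ 2 := by exact_mod_cast h1
    have hnn1 : 0 ≤ euclidEnorm (PsihX *ᵥ v) := Real.sqrt_nonneg _
    have hnn2 : 0 ≤ euclidEnorm v := Real.sqrt_nonneg _
    nlinarith [sq_nonneg (euclidEnorm (PsihX *ᵥ v) - euclidEnorm v)]
  · -- part (ii)
    rw [enorm_sq_eq]
    set c := (starRingEnd ℂ) l with hc
    have hstarc : star c = l := by simp [hc, Complex.star_def]
    have eYY : star (PsihY *ᵥ v) ⬝ᵥ (PsihY *ᵥ v) = star v ⬝ᵥ (Lhat *ᵥ v) := by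
      rw [inner_mulVec, hYY]
    have eYX : star (PsihY *ᵥ v) ⬝ᵥ (PsihX *ᵥ v) = star v ⬝ᵥ (Khat *ᵥ v) := by
      rw [inner_mulVec, hYX]
    have eXY : star (PsihX *ᵥ v) ⬝ᵥ (PsihY *ᵥ v) = star v ⬝ᵥ (Khatᴴ *ᵥ v) := by
      rw [inner_mulVec, hXY]
    have eXX : star (PsihX *ᵥ v) ⬝ᵥ (PsihX *ᵥ v) = star v ⬝ᵥ v := by
      rw [inner_mulVec, hXX, Matrix.one_mulVec]
    have hlc : ((‖l‖ ^ 2 : ℝ) : ℂ) = l * c := by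
      rw [hc, Complex.mul_conj']; push_cast; ring
    simp only [star_sub, star_smul, sub_dotProduct, dotProduct_sub, smul_dotProduct,
      dotProduct_smul, smul_eq_mul, hstarc, Matrix.sub_mulVec, Matrix.add_mulVec,
      Matrix.smul_mulVec, Matrix.one_mulVec, dotProduct_add,
      eYY, eYX, eXY, eXX, hlc]
    ring
end

section
/- (Simplified residual for left eigenpairs of kernelized EDMD, Algorithm 5) Suppose Q̂ ∈ ℂ^{M×r} with Q̂ᴴ Q̂ = I_r, Ẑ ∈ ℂ^{N×r} with Ẑᴴ Ẑ = I_r, and Σ̂ ∈ ℂ^{r×r} invertible and Hermitian satisfy (Ŵ Ψ_X)ᴴ Q̂ = Ẑ Σ̂. Define Ψ̂_X = (Ŵ Ψ_X)ᴴ Q̂ Σ̂⁻¹, Ψ̂_Y = (Ŵ Ψ_Y)ᴴ Q̂ Σ̂⁻¹, K̂ = Σ̂⁻¹ Q̂ᴴ (Ŵ Ψ_Y)(Ŵ Ψ_X)ᴴ Q̂ Σ̂⁻¹, and L̂ = (Q̂ Σ̂⁻¹)ᴴ (Ŵ Ψ_Y)(Ŵ Ψ_Y)ᴴ (Q̂ Σ̂⁻¹).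 If v ∈ ℂ^r is a left eigenvector of K̂ with eigenvalue λ, i.e. vᴴ K̂ = λ vᴴ (equivalently K̂ᴴ v = λ̄ v), then ‖Ψ̂_Y v − λ̄ Ψ̂_X v‖² = vᴴ L̂ v − |λ|² ‖v‖²; hence for v ≠ 0 the residual equals sqrt((vᴴ L̂ v)/‖v‖² − |λ|²). -/
open Matrix

/-- The Euclidean (ℓ²) norm of a complex vector. -/
noncomputable def enorm {n : ℕ} (x : Fin n → ℂ) : ℝ :=
  Real.sqrt (∑ i, ‖x i‖ ^ 2)

lemma enorm_sq_cast {n : ℕ} (x : Fin n → ℂ) : ((_root_.enorm x ^ 2 : ℝ) : ℂ) = star x ⬝ᵥ x := by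
  unfold _root_.enorm
  rw [Real.sq_sqrt (by positivity)]
  push_cast
  simp [dotProduct, Complex.conj_mul', Complex.normSq_eq_norm_sq]

lemma dp_mulVec {m n : ℕ} (A B : Matrix (Fin m) (Fin n) ℂ) (v w : Fin n → ℂ) :
    star (A *ᵥ v) ⬝ᵥ (B *ᵥ w) = star v ⬝ᵥ ((Aᴴ * B) *ᵥ w) := by
  rw [star_mulVec, dotProduct_mulVec, vecMul_vecMul, ← dotProduct_mulVec]

/-- (Simplified residual for left eigenpairs of kernelized EDMD, Algorithm 5.) If `v` is a
left eigenvector of `K̂` with eigenvalue `λ` (i.e. `K̂ᴴ v = λ̄ v`), then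
`‖Ψ̂_Y v − λ̄ Ψ̂_X v‖² = vᴴ L̂ v − |λ|² ‖v‖²`; hence for `v ≠ 0` the residual equals
`sqrt((vᴴ L̂ v)/‖v‖² − |λ|²)`. -/
theorem kernelized_left_eigenpair_residual
    {M N r : ℕ}
    (PsiX PsiY : Matrix (Fin M) (Fin N) ℂ)
    (W : Matrix (Fin M) (Fin M) ℂ)
    (Qh : Matrix (Fin M) (Fin r) ℂ) (hQ : Qhᴴ * Qh = 1)
    (Zh : Matrix (Fin N) (Fin r) ℂ) (hZ : Zhᴴ * Zh = 1)
    (Sh : Matrix (Fin r) (Fin r) ℂ) (hSH : Shᴴ = Sh) (hS : IsUnit Sh.det)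
    (hSVD : (W * PsiX)ᴴ * Qh = Zh * Sh)
    (PsihX PsihY : Matrix (Fin N) (Fin r) ℂ)
    (hPsihX : PsihX = (W * PsiX)ᴴ * Qh * Sh⁻¹)
    (hPsihY : PsihY = (W * PsiY)ᴴ * Qh * Sh⁻¹)
    (Khat : Matrix (Fin r) (Fin r) ℂ)
    (hKhat : Khat = Sh⁻¹ * Qhᴴ * (W * PsiY) * (W * PsiX)ᴴ * Qh * Sh⁻¹)
    (Lhat : Matrix (Fin r) (Fin r) ℂ)
    (hLhat : Lhat = (Qh * Sh⁻¹)ᴴ * (W * PsiY) * (W * PsiY)ᴴ * (Qh * Sh⁻¹))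
    (l : ℂ) (v : Fin r → ℂ)
    (hv : Khatᴴ *ᵥ v = (starRingEnd ℂ) l • v) :
    ((_root_.enorm (PsihY *ᵥ v - (starRingEnd ℂ) l • (PsihX *ᵥ v)) ^ 2 : ℝ) : ℂ) =
        star v ⬝ᵥ (Lhat *ᵥ v) - ((‖l‖ ^ 2 : ℝ) : ℂ) * ((_root_.enorm v ^ 2 : ℝ) : ℂ) ∧
      (v ≠ 0 →
        _root_.enorm (PsihY *ᵥ v - (starRingEnd ℂ) l • (PsihX *ᵥ v)) / _root_.enorm v =
          Real.sqrt ((star v ⬝ᵥ (Lhat *ᵥ v)).re / _root_.enorm v ^ 2 - ‖l‖ ^ 2)) := by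

  have hSinvH : (Sh⁻¹)ᴴ = Sh⁻¹ := by rw [conjTranspose_nonsing_inv, hSH]
  have hSS : Sh * Sh⁻¹ = 1 := mul_nonsing_inv Sh hS
  have hX : PsihX = Zh := by
    rw [hPsihX, hSVD, Matrix.mul_assoc, hSS, Matrix.mul_one]
  have hXX : PsihXᴴ * PsihX = 1 := by rw [hX, hZ]
  have hYY : PsihYᴴ * PsihY = Lhat := by
    rw [hPsihY, hLhat]
    simp only [conjTranspose_mul, conjTranspose_conjTranspose, hSinvH, Matrix.mul_assoc]
  have hSVD2 : (W * PsiX)ᴴ * (Qh * Sh⁻¹) = Zh := by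
    rw [← Matrix.mul_assoc, hSVD, Matrix.mul_assoc, hSS, Matrix.mul_one]
  have hSVD3 : PsiXᴴ * (Wᴴ * (Qh * Sh⁻¹)) = Zh := by
    rw [← Matrix.mul_assoc, ← conjTranspose_mul]; exact hSVD2
  have hYX : PsihYᴴ * PsihX = Khat := by
    rw [hPsihY, hX, hKhat]
    simp only [conjTranspose_mul, conjTranspose_conjTranspose, hSinvH, Matrix.mul_assoc]
    rw [hSVD3]
  have hXY : PsihXᴴ * PsihY = Khatᴴ := by
    rw [← hYX, conjTranspose_mul, conjTranspose_conjTranspose]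
  set a := PsihY *ᵥ v with ha
  set b := PsihX *ᵥ v with hb
  set c := (starRingEnd ℂ) l with hc
  have hn : ((_root_.enorm v ^ 2 : ℝ) : ℂ) = star v ⬝ᵥ v := enorm_sq_cast v
  have haa : star a ⬝ᵥ a = star v ⬝ᵥ (Lhat *ᵥ v) := by rw [ha, dp_mulVec, hYY]
  have hba : star b ⬝ᵥ a = c * (star v ⬝ᵥ v) := by
    rw [hb, ha, dp_mulVec, hXY, hv]
    simp [dotProduct_smul]
  have hbb : star b ⬝ᵥ b = star v ⬝ᵥ v := by
    rw [hb, dp_mulVec, hXX, one_mulVec]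
  have hstarn : star (star v ⬝ᵥ v) = star v ⬝ᵥ v := by
    rw [← hn]; exact Complex.conj_ofReal _
  have hab : star a ⬝ᵥ b = l * (star v ⬝ᵥ v) := by
    have h1 : star (star b ⬝ᵥ a) = star a ⬝ᵥ b := by
      simp [dotProduct, mul_comm]
    rw [← h1, hba, star_mul', hstarn, hc]
    simp
  have hl2 : ((‖l‖ ^ 2 : ℝ) : ℂ) = l * c := by
    rw [hc, Complex.mul_conj]
    norm_num [Complex.normSq_eq_norm_sq]
  have key : ((_root_.enorm (a - c • b) ^ 2 : ℝ) : ℂ) =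
      star v ⬝ᵥ (Lhat *ᵥ v) - ((‖l‖ ^ 2 : ℝ) : ℂ) * ((_root_.enorm v ^ 2 : ℝ) : ℂ) := by
    rw [enorm_sq_cast]
    simp only [star_sub, star_smul, sub_dotProduct, dotProduct_sub, smul_dotProduct,
      dotProduct_smul, smul_eq_mul, star_trivial]
    rw [haa, hba, hab, hbb, hn, hl2]
    ring
  refine ⟨key, fun hv0 => ?_⟩
  have hEnn : 0 ≤ _root_.enorm (a - c • b) := Real.sqrt_nonneg _
  have hvpos : 0 < _root_.enorm v := by
    obtain ⟨i, hi⟩ := Function.ne_iff.mp hv0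
    exact Real.sqrt_pos.mpr (Finset.sum_pos' (fun j _ => by positivity)
      ⟨i, Finset.mem_univ i, pow_pos (norm_pos_iff.mpr hi) 2⟩)
  have hre : _root_.enorm (a - c • b) ^ 2 =
      (star v ⬝ᵥ (Lhat *ᵥ v)).re - ‖l‖ ^ 2 * _root_.enorm v ^ 2 := by
    have h2 : ((_root_.enorm (a - c • b) ^ 2 + ‖l‖ ^ 2 * _root_.enorm v ^ 2 : ℝ) : ℂ) =
        star v ⬝ᵥ (Lhat *ᵥ v) := by
      have key' := key
      push_cast at key' ⊢
      linear_combination key'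
    have h3 := congrArg Complex.re h2
    rw [Complex.ofReal_re] at h3
    linarith
  have heq : (star v ⬝ᵥ (Lhat *ᵥ v)).re / _root_.enorm v ^ 2 - ‖l‖ ^ 2 =
      _root_.enorm (a - c • b) ^ 2 / _root_.enorm v ^ 2 := by
    rw [hre]
    have hn2 : _root_.enorm v ^ 2 ≠ 0 := by positivity
    field_simp
  rw [heq, Real.sqrt_div (by positivity), Real.sqrt_sq hEnn, Real.sqrt_sq hvpos.le]
end
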